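/- Let p be a prime and let ℓ be a full-rank ℤ-submodule of ℤ^n of index p, regarded as a sublattice of I_n with the standard bilinear form. Then there exist integers u_2 ≤ u_3 ≤ ⋯ ≤ u_n with 0 ≤ u_i ≤ p/2 such that ℓ is isometric to the sublattice I_{u_2,…,u_n}(p) of ℤ^n spanned by the vectors e_2 + u_2·e_1, e_3 + u_3·e_1, …, e_n + u_n·e_1 and p·e_1, where e_1,…,e_n is the standard basis of ℤ^n. -/

import Mathlib

open Matrix

private def psiFun (p n : ℕ) [NeZero n] (u : Fin n → ℤ) : (Fin n → ℤ) →ₗ[ℤ] ZMod p where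
  toFun y := (y 0 : ZMod p) - ∑ i ∈ Finset.univ.erase 0, (u i : ZMod p) * (y i : ZMod p)
  map_add' x y := by
    simp only [Pi.add_apply, Int.cast_add, mul_add, Finset.sum_add_distrib]
    ring
  map_smul' c y := by
    simp only [Pi.smul_apply, smul_eq_mul, Int.cast_mul, zsmul_eq_mul, RingHom.id_apply,
      eq_intCast, Int.cast_id]
    rw [mul_sub, Finset.mul_sum]
    congr 1
    exact Finset.sum_congr rfl fun i _ => by ring

private lemma psiFun_apply (p n : ℕ) [NeZero n] (u : Fin n → ℤ) (y : Fin n → ℤ) :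
    psiFun p n u y = (y 0 : ZMod p) - ∑ i ∈ Finset.univ.erase 0, (u i : ZMod p) * (y i : ZMod p) :=
  rfl

private lemma span_eq_ker (n : ℕ) [NeZero n] (p : ℕ) [NeZero p] (u : Fin n → ℤ) :
    Submodule.span ℤ ({(p : ℤ) • Pi.single (0 : Fin n) 1} ∪
      {w : Fin n → ℤ | ∃ i : Fin n, i ≠ 0 ∧ w = Pi.single i 1 + u i • Pi.single (0 : Fin n) 1})
    = LinearMap.ker (psiFun p n u) := by
  apply le_antisymm
  · rw [Submodule.span_le]
    rintro w hw
    rcases hw with hw | ⟨i, hi, rfl⟩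
    · rcases Set.mem_singleton_iff.mp hw with rfl
      simp only [SetLike.mem_coe, LinearMap.mem_ker, psiFun_apply]
      rw [Finset.sum_eq_zero (fun j hj => by
        rw [Pi.smul_apply, Pi.single_eq_of_ne (Finset.ne_of_mem_erase hj)]; simp)]
      simp
    · simp only [SetLike.mem_coe, LinearMap.mem_ker, psiFun_apply]
      have h0 : ((Pi.single i 1 + u i • Pi.single (0 : Fin n) 1 : Fin n → ℤ)) 0 = u i := by
        simp [Pi.single_eq_of_ne (Ne.symm hi)]
      have hsum : ∑ j ∈ Finset.univ.erase 0, (u j : ZMod p) *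
          ((((Pi.single i 1 + u i • Pi.single (0 : Fin n) 1 : Fin n → ℤ)) j : ℤ) : ZMod p)
          = (u i : ZMod p) := by
        rw [Finset.sum_eq_single i (fun b hb hbi => by
            simp [Pi.single_eq_of_ne hbi, Pi.single_eq_of_ne (Finset.ne_of_mem_erase hb)])
          (fun h => absurd (Finset.mem_erase.mpr ⟨hi, Finset.mem_univ i⟩) h)]
        simp [Pi.single_eq_of_ne hi]
      rw [h0, hsum]
      simp
  · intro y hy
    rw [LinearMap.mem_ker, psiFun_apply, sub_eq_zero] at hy
    have hdvd : (p : ℤ) ∣ (y 0 - ∑ i ∈ Finset.univ.erase 0, u i * y i) := by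
      rw [← ZMod.intCast_zmod_eq_zero_iff_dvd]
      push_cast
      rw [sub_eq_zero]
      exact hy
    obtain ⟨k, hk⟩ := hdvd
    have hy0 : y 0 = (p : ℤ) * k + ∑ i ∈ Finset.univ.erase 0, u i * y i := by linarith [hk]
    have hrepr : y = k • ((p : ℤ) • Pi.single (0 : Fin n) 1) +
        ∑ i ∈ Finset.univ.erase 0, y i • ((Pi.single i 1 : Fin n → ℤ) + u i • Pi.single (0 : Fin n) 1) := by
      funext j
      simp only [Pi.add_apply, Pi.smul_apply, smul_eq_mul, Finset.sum_apply]
      by_cases hj : j = 0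
      · subst hj
        simp only [Pi.single_eq_same, mul_one]
        rw [Finset.sum_congr rfl (fun i hi =>
          (by rw [Pi.single_eq_of_ne (Ne.symm (Finset.ne_of_mem_erase hi))]; ring :
            y i * ((Pi.single i (1:ℤ) : Fin n → ℤ) 0 + u i) = u i * y i))]
        rw [hy0]; ring
      · simp only [Pi.single_eq_of_ne hj, mul_zero, add_zero]
        rw [Finset.sum_eq_single j (fun b _ hbj => by
            rw [Pi.single_eq_of_ne (Ne.symm hbj)]; ring)
          (fun h => absurd (Finset.mem_erase.mpr ⟨hj, Finset.mem_univ j⟩) h)]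
        simp [Pi.single_eq_same]
    rw [hrepr]
    exact Submodule.add_mem _
      (Submodule.smul_mem _ _ (Submodule.subset_span (Or.inl rfl)))
      (Submodule.sum_mem _ (fun i hi => Submodule.smul_mem _ _
        (Submodule.subset_span (Or.inr ⟨i, Finset.ne_of_mem_erase hi, rfl⟩))))

private lemma exists_functional (n : ℕ) [NeZero n] (p : ℕ) (hp : p.Prime)
    (ℓ : Submodule ℤ (Fin n → ℤ)) (hidx : Nat.card ((Fin n → ℤ) ⧸ ℓ) = p) :
    ∃ b : Fin n → ZMod p, (∃ i₀, b i₀ = 1) ∧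
      ∀ x : Fin n → ℤ, (x ∈ ℓ ↔ ∑ i, b i * (x i : ZMod p) = 0) := by
  haveI : Fact p.Prime := ⟨hp⟩
  haveI : NeZero p := ⟨hp.ne_zero⟩
  haveI hfin : Finite ((Fin n → ℤ) ⧸ ℓ) := Nat.finite_of_card_ne_zero (by rw [hidx]; exact hp.ne_zero)
  haveI hnt : Nontrivial ((Fin n → ℤ) ⧸ ℓ) := by
    by_contra hh
    rw [not_nontrivial_iff_subsingleton] at hh
    have := Nat.card_unique (α := (Fin n → ℤ) ⧸ ℓ)
    have := hp.one_lt
    omega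
  have hsmul : ∀ x : (Fin n → ℤ) ⧸ ℓ, p • x = 0 := fun x => by
    rw [← addOrderOf_dvd_iff_nsmul_eq_zero, ← hidx]
    exact addOrderOf_dvd_natCard x
  haveI : Module (ZMod p) ((Fin n → ℤ) ⧸ ℓ) := AddCommGroup.zmodModule hsmul
  obtain ⟨q, hq⟩ := exists_ne (0 : (Fin n → ℤ) ⧸ ℓ)
  have hinj : Function.Injective (LinearMap.toSpanSingleton (ZMod p) ((Fin n → ℤ) ⧸ ℓ) q) := by
    rw [← LinearMap.ker_eq_bot]
    exact LinearMap.ker_toSpanSingleton _ hq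
  have hbij : Function.Bijective (LinearMap.toSpanSingleton (ZMod p) ((Fin n → ℤ) ⧸ ℓ) q) :=
    (Nat.bijective_iff_injective_and_card _).mpr ⟨hinj, by rw [Nat.card_zmod, hidx]⟩
  let e : ZMod p ≃ₗ[ZMod p] ((Fin n → ℤ) ⧸ ℓ) := LinearEquiv.ofBijective _ hbij
  let Φ : (Fin n → ℤ) →+ ZMod p :=
    (e.symm.toLinearMap.toAddMonoidHom).comp (ℓ.mkQ.toAddMonoidHom)
  have hΦ0 : ∀ x : Fin n → ℤ, (Φ x = 0 ↔ x ∈ ℓ) := fun x => by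
    show e.symm (Submodule.Quotient.mk x) = 0 ↔ _
    rw [LinearEquiv.map_eq_zero_iff, Submodule.Quotient.mk_eq_zero]
  set a : Fin n → ZMod p := fun i => Φ (Pi.single i 1) with ha
  have hsum : ∀ x : Fin n → ℤ, Φ x = ∑ i, a i * (x i : ZMod p) := fun x => by
    conv_lhs => rw [← Finset.univ_sum_single x, map_sum]
    refine Finset.sum_congr rfl fun i _ => ?_
    have h1 : Pi.single i (x i) = (x i) • (Pi.single i 1 : Fin n → ℤ) := by
      rw [← Pi.single_smul, smul_eq_mul, mul_one]
    rw [h1, map_zsmul, zsmul_eq_mul, ha, mul_comm]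
  have hex : ∃ j, a j ≠ 0 := by
    by_contra hall
    push_neg at hall
    obtain ⟨x, hx⟩ := Submodule.Quotient.mk_surjective ℓ q
    have : Φ x = 0 := by rw [hsum]; exact Finset.sum_eq_zero fun i _ => by rw [hall i, zero_mul]
    rw [hΦ0] at this
    exact hq (by rw [← hx, Submodule.Quotient.mk_eq_zero]; exact this)
  obtain ⟨j, hj⟩ := hex
  refine ⟨fun i => (a j)⁻¹ * a i, ⟨j, inv_mul_cancel₀ hj⟩, fun x => ?_⟩
  rw [← hΦ0 x, hsum x]
  constructor
  · intro h
    rw [Finset.sum_congr rfl (fun i _ => (mul_assoc _ _ _ : (a j)⁻¹ * a i * (x i : ZMod p) = _)),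
      ← Finset.mul_sum, h, mul_zero]
  · intro h
    rw [Finset.sum_congr rfl (fun i _ => (mul_assoc _ _ _ : (a j)⁻¹ * a i * (x i : ZMod p) = _)),
      ← Finset.mul_sum] at h
    rcases mul_eq_zero.mp h with h' | h'
    · exact absurd h' (inv_ne_zero hj)
    · exact h'


/-- any full-rank sublattice of `I_n` of prime index `p` is isometric
(as a lattice with the standard bilinear form on `ℤ^n`) to the sublattice
`I_{u_2,…,u_n}(p)` spanned by `e_2 + u_2 e_1, …, e_n + u_n e_1` and `p e_1`,
for some integers `0 ≤ u_2 ≤ ⋯ ≤ u_n ≤ p/2`. -/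
theorem sublattice_of_prime_index_isometric (n : ℕ) [NeZero n] (p : ℕ) (hp : p.Prime)
    (ℓ : Submodule ℤ (Fin n → ℤ)) (hidx : Nat.card ((Fin n → ℤ) ⧸ ℓ) = p) :
    ∃ u : Fin n → ℤ,
      (∀ i : Fin n, i ≠ 0 → 0 ≤ u i ∧ 2 * u i ≤ (p : ℤ)) ∧
      (∀ i j : Fin n, i ≠ 0 → i ≤ j → u i ≤ u j) ∧
      ∃ e : ℓ ≃ₗ[ℤ] (Submodule.span ℤ
          ({(p : ℤ) • Pi.single (0 : Fin n) 1} ∪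
            {w : Fin n → ℤ | ∃ i : Fin n, i ≠ 0 ∧
              w = Pi.single i 1 + u i • Pi.single (0 : Fin n) 1})),
        ∀ x y : ℓ,
          ((e x : Fin n → ℤ) ⬝ᵥ (e y : Fin n → ℤ)) = (x : Fin n → ℤ) ⬝ᵥ (y : Fin n → ℤ) := by
  classical
  haveI : Fact p.Prime := ⟨hp⟩
  haveI : NeZero p := ⟨hp.ne_zero⟩
  obtain ⟨b, ⟨i₀, hb1⟩, hker⟩ := exists_functional n p hp ℓ hidx
  set ε : Fin n → ℤ := fun j => if j = i₀ then 1 else if ((-b j).val ≤ (b j).val) then 1 else -1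
    with hε
  set m : Fin n → ℕ := fun j => min (b j).val ((-b j)).val with hm
  have hε1 : ∀ j, ε j = 1 ∨ ε j = -1 := fun j => by
    rw [hε]; dsimp only; split_ifs <;> simp
  have hεsq : ∀ j, ε j * ε j = 1 := fun j => by rcases hε1 j with h | h <;> rw [h] <;> ring
  have hεi₀ : ε i₀ = 1 := by rw [hε]; dsimp only; rw [if_pos rfl]
  have hεb : ∀ j, j ≠ i₀ → (ε j : ZMod p) * b j = -(m j : ZMod p) := by
    intro j hj
    rw [hε, hm]
    dsimp only
    rw [if_neg hj]
    split_ifs with h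
    · rw [min_eq_right h]
      push_cast
      rw [ZMod.natCast_val, ZMod.cast_id]
      ring
    · rw [min_eq_left (le_of_not_ge h)]
      push_cast
      rw [ZMod.natCast_val, ZMod.cast_id]
      ring
  have hm2 : ∀ j, 2 * (m j : ℤ) ≤ (p : ℤ) := by
    intro j
    have h1 : (b j).val < p := ZMod.val_lt _
    have h2 := ZMod.neg_val (b j)
    have : 2 * m j ≤ p := by
      by_cases hbj : b j = 0
      · rw [hm]; dsimp only; rw [hbj]; simp
      · rw [if_neg hbj] at h2
        rw [hm]; dsimp only
        omega
    exact_mod_cast this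
  set g : Fin n → ℤ := fun j => if j = i₀ then -1 else (m j : ℤ) with hg
  set σ : Equiv.Perm (Fin n) := Tuple.sort g with hσ
  have hmono : Monotone (g ∘ σ) := Tuple.monotone_sort g
  have hσ0 : σ 0 = i₀ := by
    by_contra h
    have h1 : g (σ 0) ≤ g (σ (σ.symm i₀)) := hmono (Fin.zero_le _)
    rw [Equiv.apply_symm_apply] at h1
    have h2 : g i₀ = -1 := by rw [hg]; simp
    have h3 : (0:ℤ) ≤ g (σ 0) := by
      rw [hg]; dsimp only; rw [if_neg h]; positivity
    omega
  set u : Fin n → ℤ := fun i => if i = 0 then 0 else g (σ i) with hu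
  have hu_eq : ∀ i : Fin n, i ≠ 0 → u i = (m (σ i) : ℤ) := by
    intro i hi
    have hσi : σ i ≠ i₀ := fun h => hi (σ.injective (h.trans hσ0.symm))
    rw [hu]; dsimp only; rw [if_neg hi, hg]; dsimp only; rw [if_neg hσi]
  have hmon : ∀ i j : Fin n, i ≠ 0 → i ≤ j → u i ≤ u j := by
    intro i j hi hij
    have hj : j ≠ 0 := by
      intro hj0
      exact hi (le_antisymm (hj0 ▸ hij) (Fin.zero_le i))
    rw [hu]; dsimp only; rw [if_neg hi, if_neg hj]
    exact hmono hij
  let F : (Fin n → ℤ) ≃ₗ[ℤ] (Fin n → ℤ) :=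
  { toFun := fun x i => ε (σ i) * x (σ i)
    invFun := fun y j => ε j * y (σ.symm j)
    left_inv := fun x => by
      funext j
      show ε j * (ε (σ (σ.symm j)) * x (σ (σ.symm j))) = x j
      rw [Equiv.apply_symm_apply, ← mul_assoc, hεsq, one_mul]
    right_inv := fun y => by
      funext i
      show ε (σ i) * (ε (σ i) * y (σ.symm (σ i))) = y i
      rw [Equiv.symm_apply_apply, ← mul_assoc, hεsq, one_mul]
    map_add' := fun x y => by funext i; show ε (σ i) * (x (σ i) + y (σ i)) = _; simp [mul_add]
    map_smul' := fun c x => by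
      funext i
      show ε (σ i) * (c * x (σ i)) = c * (ε (σ i) * x (σ i))
      ring }
  have hF : ∀ (x : Fin n → ℤ) (i : Fin n), F x i = ε (σ i) * x (σ i) := fun _ _ => rfl
  have hcalc : ∀ x : Fin n → ℤ, psiFun p n u (F x) = ∑ j, b j * (x j : ZMod p) := by
    intro x
    rw [psiFun_apply]
    have hterm : ∀ i ∈ Finset.univ.erase (0 : Fin n),
        (u i : ZMod p) * ((F x i : ℤ) : ZMod p) = -(b (σ i) * ((x (σ i) : ℤ) : ZMod p)) := by
      intro i hi
      have hi0 : i ≠ 0 := Finset.ne_of_mem_erase hi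
      have hσi : σ i ≠ i₀ := fun h => hi0 (σ.injective (h.trans hσ0.symm))
      have h := hεb (σ i) hσi
      have hcastsq : ((ε (σ i) : ℤ) : ZMod p) * ((ε (σ i) : ℤ) : ZMod p) = 1 := by
        exact_mod_cast congrArg (Int.cast : ℤ → ZMod p) (hεsq (σ i))
      have hb : b (σ i) = -((m (σ i) : ZMod p) * ((ε (σ i) : ℤ) : ZMod p)) := by
        have h2 := congrArg (fun z => ((ε (σ i) : ℤ) : ZMod p) * z) h
        rw [← mul_assoc, hcastsq, one_mul] at h2
        rw [h2]; ring
      rw [hF, hu_eq i hi0, hb]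
      push_cast
      ring
    rw [Finset.sum_congr rfl hterm, Finset.sum_neg_distrib, sub_neg_eq_add]
    have h00 : ((F x 0 : ℤ) : ZMod p) = b (σ 0) * ((x (σ 0) : ℤ) : ZMod p) := by
      rw [hF, hσ0, hεi₀, hb1]
      push_cast
      ring
    rw [h00, Finset.add_sum_erase _ (fun i => b (σ i) * ((x (σ i) : ℤ) : ZMod p)) (Finset.mem_univ 0)]
    exact Equiv.sum_comp σ (fun j => b j * ((x j : ℤ) : ZMod p))
  have hmap : Submodule.map (↑F : (Fin n → ℤ) →ₗ[ℤ] (Fin n → ℤ)) ℓ =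
      Submodule.span ℤ ({(p : ℤ) • Pi.single (0 : Fin n) 1} ∪
        {w : Fin n → ℤ | ∃ i : Fin n, i ≠ 0 ∧
          w = Pi.single i 1 + u i • Pi.single (0 : Fin n) 1}) := by
    rw [span_eq_ker n p u]
    ext y
    have hc := hcalc (F.symm y)
    rw [LinearEquiv.apply_symm_apply] at hc
    rw [Submodule.mem_map_equiv, LinearMap.mem_ker, hker (F.symm y), ← hc]
  refine ⟨u, fun i hi => ⟨?_, ?_⟩, hmon, LinearEquiv.ofSubmodules F ℓ _ hmap, fun x y => ?_⟩
  · rw [hu_eq i hi]; positivity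
  · rw [hu_eq i hi]; exact hm2 (σ i)
  · rw [LinearEquiv.ofSubmodules_apply, LinearEquiv.ofSubmodules_apply]
    show (F (x : Fin n → ℤ)) ⬝ᵥ (F (y : Fin n → ℤ)) = _
    simp only [dotProduct, hF]
    rw [← Equiv.sum_comp σ (fun j => (x : Fin n → ℤ) j * (y : Fin n → ℤ) j)]
    refine Finset.sum_congr rfl fun i _ => ?_
    rcases hε1 (σ i) with h | h <;> rw [h] <;> ring
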